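/- Let d > 0, let U ∈ C¹([−d,0];ℝ) be nonvanishing, let κ > 0, and let q ∈ C¹([−d,0];ℝ) satisfy q′ = 2(U′/U)q + κ² − q² on [−d,0] with q(−d) = 0. Set m = inf_{x₃∈[−d,0]} U′(x₃)/U(x₃) and s = √(m² + κ²). Then q(0) ≥ κ² tanh(d s) / (s − m tanh(d s)); equivalently, q(0)/κ ≥ κ tanh(d√(m²+κ²)) / (√(m²+κ²) − m tanh(d√(m²+κ²))). -/

import Mathlib

open Set

lemma tanh_hasDerivAt (x : ℝ) : HasDerivAt Real.tanh (1 - Real.tanh x ^ 2) x := by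
  have h := (Real.hasDerivAt_sinh x).div (Real.hasDerivAt_cosh x) (Real.cosh_pos x).ne'
  have he : (fun y => Real.sinh y / Real.cosh y) = Real.tanh := by
    funext y; rw [Real.tanh_eq_sinh_div_cosh]
  rw [show (Real.sinh / Real.cosh) = Real.tanh from he] at h
  refine h.congr_deriv (Eq.symm ?_)
  rw [Real.tanh_eq_sinh_div_cosh]
  have hc := (Real.cosh_pos x).ne'
  field_simp

lemma tanh_nonneg' {x : ℝ} (hx : 0 ≤ x) : 0 ≤ Real.tanh x := by
  rw [Real.tanh_eq_sinh_div_cosh]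
  exact div_nonneg (by rwa [Real.sinh_nonneg_iff]) (Real.cosh_pos x).le

lemma tanh_lt_one' (x : ℝ) : Real.tanh x < 1 := by
  rw [Real.tanh_eq_sinh_div_cosh, div_lt_one (Real.cosh_pos x)]
  exact Real.sinh_lt_cosh x

/-- Lower bound for `q(0)`: with `m = inf U′/U` and `s = √(m²+κ²)`,
the Riccati solution satisfies `q(0) ≥ κ² tanh(ds)/(s − m tanh(ds))`. -/
theorem stmt_10 (d : ℝ) (hd : 0 < d) (U q : ℝ → ℝ) (κ : ℝ) (hκ : 0 < κ)
    (hU : ContDiffOn ℝ 1 U (Set.Icc (-d) 0))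
    (hU0 : ∀ t ∈ Set.Icc (-d) 0, U t ≠ 0)
    (hq : ContDiffOn ℝ 1 q (Set.Icc (-d) 0))
    (hode : ∀ x ∈ Set.Icc (-d) 0,
      derivWithin q (Set.Icc (-d) 0) x
        = 2 * (derivWithin U (Set.Icc (-d) 0) x / U x) * q x + κ ^ 2 - (q x) ^ 2)
    (hq0 : q (-d) = 0)
    (m s : ℝ)
    (hm : m = sInf ((fun x => derivWithin U (Set.Icc (-d) 0) x / U x) '' Set.Icc (-d) 0))
    (hs : s = Real.sqrt (m ^ 2 + κ ^ 2)) :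
    κ ^ 2 * Real.tanh (d * s) / (s - m * Real.tanh (d * s)) ≤ q 0 := by
  have hdd : -d < (0:ℝ) := by linarith
  set I : Set ℝ := Set.Icc (-d) 0 with hI
  have hIu : UniqueDiffOn ℝ I := uniqueDiffOn_Icc hdd
  have hmem0 : (0:ℝ) ∈ I := ⟨hdd.le, le_rfl⟩
  have hmemd : -d ∈ I := ⟨le_rfl, hdd.le⟩
  set a : ℝ → ℝ := fun x => derivWithin U I x / U x with ha
  have ha_cont : ContinuousOn a I :=
    ((hU.continuousOn_derivWithin hIu le_rfl).div hU.continuousOn hU0)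
  have hma : ∀ x ∈ I, m ≤ a x := by
    intro x hx
    rw [hm]
    exact csInf_le (isCompact_Icc.image_of_continuousOn ha_cont).bddBelow
      (Set.mem_image_of_mem _ hx)
  -- facts about s
  have hsq : s ^ 2 = m ^ 2 + κ ^ 2 := by
    rw [hs]; exact Real.sq_sqrt (by positivity)
  have hs0 : 0 < s := by
    rw [hs]; positivity
  have hms : |m| < s := by
    have : |m| ^ 2 < s ^ 2 := by rw [sq_abs, hsq]; nlinarith
    exact lt_of_pow_lt_pow_left₀ 2 hs0.le this
  -- the comparison function p
  set T : ℝ → ℝ := fun x => Real.tanh (s * (x + d)) with hT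
  set D : ℝ → ℝ := fun x => s - m * T x with hD
  have hT0 : ∀ x, -d ≤ x → 0 ≤ T x := fun x hx =>
    tanh_nonneg' (by nlinarith)
  have hT1 : ∀ x, T x < 1 := fun x => tanh_lt_one' _
  have hDpos : ∀ x, -d ≤ x → 0 < D x := by
    intro x hx
    have h1 : m * T x ≤ |m| * T x :=
      mul_le_mul_of_nonneg_right (le_abs_self m) (hT0 x hx)
    have h2 : |m| * T x ≤ |m| * 1 :=
      mul_le_mul_of_nonneg_left (hT1 x).le (abs_nonneg m)
    simp only [hD]; nlinarith
  set p : ℝ → ℝ := fun x => κ ^ 2 * T x / D x with hp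
  have hTderiv : ∀ x, HasDerivAt T (s * (1 - T x ^ 2)) x := by
    intro x
    have hlin : HasDerivAt (fun y : ℝ => s * (y + d)) s x := by
      simpa using (((hasDerivAt_id x).add_const d).const_mul s)
    have := (tanh_hasDerivAt (s * (x + d))).comp x hlin
    exact this.congr_deriv (by simp only [hT]; ring)
  have hpderiv : ∀ x, -d ≤ x → HasDerivAt p (2 * m * p x + κ ^ 2 - p x ^ 2) x := by
    intro x hx
    have hDne : D x ≠ 0 := (hDpos x hx).ne'
    have hDd : HasDerivAt D (-(m * (s * (1 - T x ^ 2)))) x := by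
      simpa using ((hTderiv x).const_mul m).const_sub s
    have hNd : HasDerivAt (fun y => κ ^ 2 * T y) (κ ^ 2 * (s * (1 - T x ^ 2))) x :=
      (hTderiv x).const_mul _
    have h := hNd.div hDd hDne
    have hDne' : s - m * T x ≠ 0 := by simpa [hD] using hDne
    have e1 : κ ^ 2 * (s * (1 - T x ^ 2)) * D x - κ ^ 2 * T x * -(m * (s * (1 - T x ^ 2)))
        = κ ^ 2 * s ^ 2 * (1 - T x ^ 2) := by simp only [hD]; ring
    have hpd : p x * (s - m * T x) = κ ^ 2 * T x := by
      simp only [hp, hD]; rw [div_mul_cancel₀ _ hDne']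
    have e2 : (2 * m * p x + κ ^ 2 - p x ^ 2) * D x ^ 2 = κ ^ 2 * s ^ 2 * (1 - T x ^ 2) := by
      simp only [hD]
      linear_combination (κ ^ 2 * T x ^ 2) * hsq
        + (2 * m * (s - m * T x) - p x * (s - m * T x) - κ ^ 2 * T x) * hpd
    refine h.congr_deriv (Eq.symm ?_)
    rw [e1, eq_div_iff (pow_ne_zero 2 hDne)]
    exact e2
  have hp0 : p (-d) = 0 := by simp [hp, hT]
  have hp_nonneg : ∀ x ∈ I, 0 ≤ p x := fun x hx =>
    div_nonneg (mul_nonneg (by positivity) (hT0 x hx.1)) (hDpos x hx.1).le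
  -- comparison via integrating factor
  have hp_cont : ContinuousOn p I := fun x hx =>
    ((hpderiv x hx.1).differentiableAt.continuousAt).continuousWithinAt
  set c : ℝ → ℝ := fun x => 2 * a x - (q x + p x) with hc
  have hc_cont : ContinuousOn c I :=
    (continuousOn_const.mul ha_cont).sub (hq.continuousOn.add hp_cont)
  have hIuIcc : Set.uIcc (-d) 0 = I := Set.uIcc_of_le hdd.le
  have hc_intOn : MeasureTheory.IntegrableOn c (Set.uIcc (-d) 0) MeasureTheory.volume := by
    rw [hIuIcc]; exact hc_cont.integrableOn_Icc
  set C : ℝ → ℝ := fun x => ∫ t in (-d)..x, c t with hC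
  have hC_cont : ContinuousOn C I := by
    have := intervalIntegral.continuousOn_primitive_interval hc_intOn
    rwa [hIuIcc] at this
  have hCd : ∀ x ∈ Set.Ioo (-d) (0:ℝ), HasDerivAt C (c x) x := by
    intro x hx
    have hnb : I ∈ nhds x := Icc_mem_nhds hx.1 hx.2
    have hcx : ContinuousAt c x := hc_cont.continuousAt hnb
    have hsub : Set.uIcc (-d) x ⊆ I := by
      rw [Set.uIcc_of_le hx.1.le]; exact Set.Icc_subset_Icc le_rfl hx.2.le
    have hint : IntervalIntegrable c MeasureTheory.volume (-d) x :=
      (hc_cont.mono hsub).intervalIntegrable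
    have hmeas : StronglyMeasurableAtFilter c (nhds x) MeasureTheory.volume :=
      ⟨I, hnb, hc_cont.aestronglyMeasurable measurableSet_Icc⟩
    exact intervalIntegral.integral_hasDerivAt_right hint hmeas hcx
  set F : ℝ → ℝ := fun x => (q x - p x) * Real.exp (-C x) with hF
  have hF_cont : ContinuousOn F I :=
    ((hq.continuousOn.sub hp_cont).mul (hC_cont.neg.rexp))
  have hFd : ∀ x ∈ Set.Ioo (-d) (0:ℝ),
      HasDerivAt F (2 * (a x - m) * p x * Real.exp (-C x)) x := by
    intro x hx
    have hxI : x ∈ I := Set.Ioo_subset_Icc_self hx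
    have hnb : I ∈ nhds x := Icc_mem_nhds hx.1 hx.2
    have hqd : HasDerivAt q (2 * a x * q x + κ ^ 2 - q x ^ 2) x := by
      have hdiff : DifferentiableAt ℝ q x :=
        ((hq.differentiableOn one_ne_zero) x hxI).differentiableAt hnb
      have := hdiff.hasDerivAt
      rwa [← derivWithin_of_mem_nhds hnb, hode x hxI] at this
    have hpd : HasDerivAt p (2 * m * p x + κ ^ 2 - p x ^ 2) x := hpderiv x hxI.1
    have hEd : HasDerivAt (fun y => Real.exp (-C y)) (-c x * Real.exp (-C x)) x := by
      have := ((hCd x hx).neg).exp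
      simpa [mul_comm] using this
    have h := (hqd.sub hpd).mul hEd
    refine h.congr_deriv ?_
    simp only [hc, Pi.sub_apply]
    ring
  have hF_mono : MonotoneOn F I := by
    apply monotoneOn_of_deriv_nonneg (convex_Icc _ _) hF_cont
    · intro x hx
      rw [interior_Icc] at hx
      exact (hFd x hx).differentiableAt.differentiableWithinAt
    · intro x hx
      rw [interior_Icc] at hx
      rw [(hFd x hx).deriv]
      have hxI : x ∈ I := Set.Ioo_subset_Icc_self hx
      have h1 : 0 ≤ a x - m := sub_nonneg.2 (hma x hxI)
      have h2 : 0 ≤ p x := hp_nonneg x hxI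
      positivity
  have hkey := hF_mono hmemd hmem0 hdd.le
  have hFd0 : F (-d) = 0 := by simp [hF, hq0, hp0]
  rw [hFd0] at hkey
  have hq0p : p 0 ≤ q 0 := by
    have hE : 0 < Real.exp (-C 0) := Real.exp_pos _
    have hkey' : 0 ≤ (q 0 - p 0) * Real.exp (-C 0) := by simpa [hF] using hkey
    nlinarith [hkey', hE]
  have : p 0 = κ ^ 2 * Real.tanh (d * s) / (s - m * Real.tanh (d * s)) := by
    simp only [hp, hD, hT]
    rw [zero_add, mul_comm s d]
  rw [← this]; exact hq0p
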